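/- Over an alphabet Σ = {σ₁, …, σₖ}, the string α = (σ₁σ₂⋯σₖ)^ω is a greatest element under quasi-isometric reducibility: for every string β ∈ Σ^ω there exists a quasi-isometry from β to α. -/
import Mathlib


def IsQI {Γ : Type*} (α β : ℕ → Γ) (f : ℕ → ℕ) (A B : ℝ) : Prop :=
  1 ≤ A ∧ 0 ≤ B ∧ (∀ n, α n = β (f n)) ∧
  (∀ x y : ℕ, (1 / A) * |(x : ℝ) - (y : ℝ)| - B ≤ |(f x : ℝ) - (f y : ℝ)| ∧
      |(f x : ℝ) - (f y : ℝ)| ≤ A * |(x : ℝ) - (y : ℝ)| + B) ∧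
  (∀ m : ℕ, ∃ x : ℕ, |(m : ℝ) - (f x : ℝ)| ≤ A)

/-- `α ≤_QI β`: there is a quasi-isometry from `α` to `β`. -/
def QI {Γ : Type*} (α β : ℕ → Γ) : Prop := ∃ f A B, IsQI α β f A B

/-- Over an alphabet of size `k ≥ 2`, the string `(σ₁σ₂⋯σₖ)^ω` (which colours
position `i` with letter `i mod k`) is a greatest element under quasi-isometric
reducibility: every string reduces to it. -/
theorem cyclic_string_is_greatest (k : ℕ) (hk : 2 ≤ k) (β : ℕ → Fin k) :
    QI β (fun i => (⟨i % k, Nat.mod_lt i (by omega)⟩ : Fin k)) := by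
  refine ⟨fun n => n * k + (β n).val, k, k, ?_, ?_, ?_, ?_, ?_⟩
  · exact_mod_cast Nat.one_le_iff_ne_zero.mpr (by omega)
  · positivity
  · intro n
    have h : (n * k + (β n).val) % k = (β n).val := by
      simp [Nat.add_mod, Nat.mul_mod_left, Nat.mod_eq_of_lt (β n).isLt]
    exact (Fin.ext (by simp [h])).symm
  · intro x y
    have hbx : ((β x).val : ℝ) ≤ k - 1 := by
      have h := (β x).isLt
      have : ((β x).val : ℝ) + 1 ≤ (k : ℝ) := by exact_mod_cast h
      linarith
    have hby : ((β y).val : ℝ) ≤ k - 1 := by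
      have h := (β y).isLt
      have : ((β y).val : ℝ) + 1 ≤ (k : ℝ) := by exact_mod_cast h
      linarith
    have hbx0 : (0 : ℝ) ≤ ((β x).val : ℝ) := Nat.cast_nonneg _
    have hby0 : (0 : ℝ) ≤ ((β y).val : ℝ) := Nat.cast_nonneg _
    have hcast : ∀ n : ℕ, ((n * k + (β n).val : ℕ) : ℝ) = n * k + (β n).val := by
      intro n; push_cast; ring
    rw [hcast x, hcast y]
    set d : ℝ := (x : ℝ) - (y : ℝ) with hd
    have he : |((β x).val : ℝ) - ((β y).val : ℝ)| ≤ k - 1 := by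
      rw [abs_le]; constructor <;> linarith
    have heq : (x : ℝ) * k + (β x).val - ((y : ℝ) * k + (β y).val)
        = k * d + (((β x).val : ℝ) - ((β y).val : ℝ)) := by rw [hd]; ring
    rw [heq]
    have hk1 : (1 : ℝ) ≤ k := by exact_mod_cast (by omega : 1 ≤ k)
    have habs1 : |(k : ℝ) * d + (((β x).val : ℝ) - ((β y).val : ℝ))| ≤
        k * |d| + (k - 1) := by
      calc |(k : ℝ) * d + _| ≤ |(k:ℝ) * d| + |((β x).val : ℝ) - ((β y).val : ℝ)| :=
            abs_add_le _ _
        _ ≤ k * |d| + (k - 1) := by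
            rw [abs_mul, abs_of_nonneg (by linarith : (0:ℝ) ≤ (k:ℝ))]; linarith
    have habs2 : (k : ℝ) * |d| - (k - 1) ≤
        |(k : ℝ) * d + (((β x).val : ℝ) - ((β y).val : ℝ))| := by
      have := abs_sub_abs_le_abs_sub ((k:ℝ) * d) (-((((β x).val : ℝ) - ((β y).val : ℝ))))
      rw [sub_neg_eq_add, abs_neg, abs_mul,
        abs_of_nonneg (by linarith : (0:ℝ) ≤ (k:ℝ))] at this
      linarith
    constructor
    · have hdnn : (0:ℝ) ≤ |d| := abs_nonneg d
      have h1k : 1 / (k:ℝ) ≤ (k:ℝ) := by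
        rw [div_le_iff₀ (by linarith)]; nlinarith
      nlinarith
    · linarith
  · intro m
    refine ⟨m / k, ?_⟩
    have h2 : m / k * k ≤ m := Nat.div_mul_le_self m k
    have h3 : m < m / k * k + k := by
      have h := Nat.div_add_mod' m k
      have := Nat.mod_lt m (show 0 < k by omega)
      omega
    have hv : (β (m / k)).val < k := (β (m / k)).isLt
    have h4 : m ≤ (m / k * k + (β (m / k)).val) + k := by omega
    have h5 : m / k * k + (β (m / k)).val ≤ m + k := by omega
    have h4' : (m : ℝ) ≤ ((m / k * k + (β (m / k)).val : ℕ) : ℝ) + (k : ℝ) := by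
      exact_mod_cast h4
    have h5' : ((m / k * k + (β (m / k)).val : ℕ) : ℝ) ≤ (m : ℝ) + (k : ℝ) := by
      exact_mod_cast h5
    rw [abs_le]
    constructor <;> linarith
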